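/- Model the hyperoctahedral group W_n as the group of permutations w of {−n,…,−1,1,…,n} satisfying w(−a) = −w(a) for all a, and write w_i := w(i) for 1 ≤ i ≤ n. Fix 0 ≤ k ≤ n−1. Call w ∈ W_n k-Grassmannian if 0 < w_1 < w_2 < ⋯ < w_k and w_{k+1} < w_{k+2} < ⋯ < w_n (for k = 0 the first chain of inequalities is empty, so the condition is w_1 < w_2 < ⋯ < w_n). Then the set of k-Grassmannian elements of W_n is in bijection with the set of k-strict partitions λ with at most n−k parts and largest part λ_1 ≤ n+k (i.e. whose Young diagram fits inside an (n−k) × (n+k) rectangle). -/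

import Mathlib

/-- The hyperoctahedral group `W_n`, modeled as permutations `w` of `ℤ` with
`w(−a) = −w(a)` for all `a` and `w(a) = a` whenever `|a| > n` (so `w`
permutes `{−n,…,−1,1,…,n}`). -/
def SignedPerms (n : ℕ) : Set (Equiv.Perm ℤ) :=
  {w | (∀ a : ℤ, w (-a) = -w a) ∧ ∀ a : ℤ, (n : ℤ) < |a| → w a = a}

/-- `w ∈ W_n` is `k`-Grassmannian: `0 < w_1 < ⋯ < w_k` and
`w_{k+1} < w_{k+2} < ⋯ < w_n`; equivalently, `0 < w_1` when `k ≥ 1`, and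
`w_i < w_{i+1}` for all `1 ≤ i ≤ n − 1` with `i ≠ k`. -/
def IsKGrassmannian (n k : ℕ) (w : Equiv.Perm ℤ) : Prop :=
  (1 ≤ k → 0 < w 1) ∧
    ∀ i : ℤ, 1 ≤ i → i + 1 ≤ (n : ℤ) → i ≠ (k : ℤ) → w i < w (i + 1)

/-- `k`-strict partitions fitting in the `(n−k) × (n+k)` rectangle: weakly
decreasing with at most `n−k` parts, no part `> k` repeated, and largest part
at most `n+k`. -/
def KStrictRect (n k : ℕ) (lam : Fin (n - k) → ℕ) : Prop :=
  Antitone lam ∧ (∀ i j : Fin (n - k), i ≠ j → k < lam i → lam i ≠ lam j) ∧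
    ∀ i, lam i ≤ n + k

namespace KG



/-- `nth s t` : the `t`-th smallest element of `s` (0-indexed), junk `0` out of range. -/
def nth (s : Finset ℤ) (t : ℕ) : ℤ := (s.sort (· ≤ ·)).getD t 0

lemma nth_eq_get (s : Finset ℤ) {t : ℕ} (ht : t < s.card) :
    nth s t = (s.sort (· ≤ ·)).get ⟨t, by rwa [Finset.length_sort]⟩ := by
  rw [nth, List.getD_eq_getElem _ _ (by rwa [Finset.length_sort])]
  simp

lemma nth_mem (s : Finset ℤ) {t : ℕ} (ht : t < s.card) : nth s t ∈ s := by
  rw [nth_eq_get s ht, ← Finset.mem_sort (α := ℤ) (· ≤ ·)]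
  apply List.get_mem

lemma nth_lt_nth (s : Finset ℤ) {t t' : ℕ} (h : t < t') (ht' : t' < s.card) :
    nth s t < nth s t' := by
  rw [nth_eq_get s (h.trans ht'), nth_eq_get s ht']
  exact Finset.sortedLT_sort s h

lemma exists_nth (s : Finset ℤ) {x : ℤ} (hx : x ∈ s) :
    ∃ t, t < s.card ∧ nth s t = x := by
  rw [← Finset.mem_sort (α := ℤ) (· ≤ ·)] at hx
  obtain ⟨⟨t, ht⟩, het⟩ := List.get_of_mem hx
  exact ⟨t, by rwa [Finset.length_sort] at ht, by rw [nth_eq_get s (by rwa [Finset.length_sort] at ht)]; exact het⟩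

lemma rank_nth (s : Finset ℤ) {t : ℕ} (ht : t < s.card) :
    (s.filter (· < nth s t)).card = t := by
  have h1 : s.filter (· < nth s t) = (Finset.range t).image (nth s) := by
    ext x
    simp only [Finset.mem_filter, Finset.mem_image, Finset.mem_range]
    constructor
    · rintro ⟨hxs, hxlt⟩
      obtain ⟨u, hu, rfl⟩ := exists_nth s hxs
      refine ⟨u, ?_, rfl⟩
      by_contra h
      push_neg at h
      rcases eq_or_lt_of_le h with h | h
      · subst h; exact lt_irrefl _ hxlt
      · exact absurd (nth_lt_nth s h hu) (not_lt.2 hxlt.le)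
    · rintro ⟨u, hu, rfl⟩
      exact ⟨nth_mem s (hu.trans ht), nth_lt_nth s hu ht⟩
  rw [h1, Finset.card_image_of_injOn, Finset.card_range]
  intro a ha b hb hab
  simp only [Finset.coe_range, Set.mem_Iio] at ha hb
  by_contra h
  rcases Nat.lt_or_ge a b with h' | h'
  · exact absurd hab (ne_of_lt (nth_lt_nth s h' (hb.trans ht)))
  · rcases Nat.lt_or_ge b a with h'' | h''
    · exact absurd hab.symm (ne_of_lt (nth_lt_nth s h'' (ha.trans ht)))
    · exact h (le_antisymm h'' h')

lemma nth_eq_of_rank (s : Finset ℤ) {x : ℤ} {t : ℕ} (hx : x ∈ s)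
    (h : (s.filter (· < x)).card = t) : nth s t = x := by
  obtain ⟨u, hu, rfl⟩ := exists_nth s hx
  rw [rank_nth s hu] at h
  subst h; rfl



/-- A downward-closed subset of `range m` is `range` of its card. -/
lemma downclosed_eq_range {S : Finset ℕ}
    (hdc : ∀ a b : ℕ, a ≤ b → b ∈ S → a ∈ S) : S = Finset.range S.card := by
  have key : ∀ t : ℕ, t ∈ S ↔ t < S.card := by
    intro t
    constructor
    · intro ht
      have : Finset.range (t + 1) ⊆ S := by
        intro a ha
        rw [Finset.mem_range] at ha
        exact hdc a t (Nat.lt_succ_iff.1 ha) ht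
      have := Finset.card_le_card this
      rwa [Finset.card_range] at this
    · intro ht
      by_contra h
      have : S ⊆ Finset.range t := by
        intro s hs
        rw [Finset.mem_range]
        by_contra h'
        exact h (hdc t s (not_lt.1 h') hs)
      have := Finset.card_le_card this
      rw [Finset.card_range] at this
      omega
  ext t
  rw [Finset.mem_range]
  exact key t

/-- Chain lemma over `ℤ`. -/
lemma chainZ {w : ℤ → ℤ} {lo hi : ℤ}
    (h : ∀ i : ℤ, lo ≤ i → i + 1 ≤ hi → w i < w (i + 1)) :
    ∀ i j : ℤ, lo ≤ i → i < j → j ≤ hi → w i < w j := by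
  intro i j hloi hij hjhi
  have key : ∀ j' : ℤ, i + 1 ≤ j' → (j' ≤ hi → w i < w j') :=
    Int.le_induction (fun hb => h i hloi (by omega))
      (fun j' hj' ih hb => (ih (by omega)).trans (h j' (by omega) hb))
  exact key j (by omega) hjhi




variable (n k : ℕ)

/-- `lam` extended to `ℕ`. -/
def lamN (lam : Fin (n - k) → ℕ) (t : ℕ) : ℕ := if h : t < n - k then lam ⟨t, h⟩ else 0

/-- indices of parts `> k`. -/
def topIdx (lam : Fin (n - k) → ℕ) : Finset ℕ :=
  (Finset.range (n - k)).filter (fun t => k < lamN n k lam t)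

def rr (lam : Fin (n - k) → ℕ) : ℕ := (topIdx n k lam).card

def Bset (lam : Fin (n - k) → ℕ) : Finset ℤ :=
  (topIdx n k lam).image (fun t => (lamN n k lam t : ℤ) - k)

noncomputable def Rset (lam : Fin (n - k) → ℕ) : Finset ℤ := Finset.Icc (1 : ℤ) n \ Bset n k lam

def idx (lam : Fin (n - k) → ℕ) (t : ℕ) : ℕ := (t - rr n k lam) + (k - lamN n k lam t)

noncomputable def cval (lam : Fin (n - k) → ℕ) (t : ℕ) : ℤ := nth (Rset n k lam) (idx n k lam t)

noncomputable def Cset (lam : Fin (n - k) → ℕ) : Finset ℤ :=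
  ((Finset.range (n - k)).filter (fun t => lamN n k lam t ≤ k)).image (cval n k lam)

noncomputable def Dset (lam : Fin (n - k) → ℕ) : Finset ℤ := Rset n k lam \ Cset n k lam

noncomputable def core (lam : Fin (n - k) → ℕ) (a : ℤ) : ℤ :=
  if a ≤ (k : ℤ) then nth (Dset n k lam) (a - 1).toNat
  else if k < lamN n k lam (a - (k : ℤ) - 1).toNat then
      (k : ℤ) - lamN n k lam (a - (k : ℤ) - 1).toNat
    else cval n k lam (a - (k : ℤ) - 1).toNat

noncomputable def uraw (lam : Fin (n - k) → ℕ) (a : ℤ) : ℤ :=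
  if 1 ≤ a ∧ a ≤ (n : ℤ) then core n k lam a
  else if 1 ≤ -a ∧ -a ≤ (n : ℤ) then -core n k lam (-a)
  else a

/-- the forward map: from a signed permutation to a partition. -/
def fmap (w : Equiv.Perm ℤ) : Fin (n - k) → ℕ := fun j =>
  if w ((k : ℤ) + 1 + (j : ℕ)) < 0 then k + (-(w ((k : ℤ) + 1 + (j : ℕ)))).toNat
  else ((Finset.Icc 1 k).filter (fun i : ℕ => w ((k : ℤ) + 1 + (j : ℕ)) < w (i : ℕ))).card

open Classical in
noncomputable def gmap (lam : Fin (n - k) → ℕ) : Equiv.Perm ℤ :=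
  if h : Function.Bijective (uraw n k lam) then Equiv.ofBijective _ h else 1


section LamFacts

variable {n k : ℕ} {lam : Fin (n - k) → ℕ}

lemma lam_anti (hlam : KStrictRect n k lam) {t t' : ℕ} (h : t ≤ t') (h' : t' < n - k) :
    lamN n k lam t' ≤ lamN n k lam t := by
  have ht : t < n - k := lt_of_le_of_lt h h'
  rw [lamN, lamN, dif_pos ht, dif_pos h']
  exact hlam.1 (by exact h)

lemma lam_strict (hlam : KStrictRect n k lam) {t t' : ℕ} (h : t < t') (h' : t' < n - k)
    (hgt : k < lamN n k lam t') : lamN n k lam t' < lamN n k lam t := by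
  have hle := lam_anti hlam h.le h'
  rcases lt_or_eq_of_le hle with h1 | h1
  · exact h1
  · exfalso
    have ht : t < n - k := h.trans h'
    have e1 : lamN n k lam t' = lam ⟨t', h'⟩ := dif_pos h'
    have e2 : lamN n k lam t = lam ⟨t, ht⟩ := dif_pos ht
    rw [e1] at h1 hgt
    rw [e2] at h1
    exact hlam.2.1 ⟨t', h'⟩ ⟨t, ht⟩ (by simp [Fin.ext_iff]; omega) hgt h1

lemma lamN_le_nk (hlam : KStrictRect n k lam) (t : ℕ) : lamN n k lam t ≤ n + k := by
  unfold lamN; split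
  · exact hlam.2.2 _
  · omega

lemma topIdx_eq (hlam : KStrictRect n k lam) :
    topIdx n k lam = Finset.range (rr n k lam) := by
  apply downclosed_eq_range
  intro a b hab hb
  rw [topIdx, Finset.mem_filter, Finset.mem_range] at hb ⊢
  exact ⟨lt_of_le_of_lt hab hb.1, lt_of_lt_of_le hb.2 (lam_anti hlam hab hb.1)⟩

lemma lt_rr_iff (hlam : KStrictRect n k lam) {t : ℕ} (ht : t < n - k) :
    t < rr n k lam ↔ k < lamN n k lam t := by
  have := topIdx_eq hlam
  constructor
  · intro h
    have : t ∈ topIdx n k lam := by rw [this]; exact Finset.mem_range.2 h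
    exact (Finset.mem_filter.1 this).2
  · intro h
    have : t ∈ topIdx n k lam := Finset.mem_filter.2 ⟨Finset.mem_range.2 ht, h⟩
    rw [topIdx_eq hlam] at this
    exact Finset.mem_range.1 this

lemma rr_le (hlam : KStrictRect n k lam) : rr n k lam ≤ n - k := by
  rw [rr]
  calc (topIdx n k lam).card ≤ (Finset.range (n - k)).card :=
        Finset.card_le_card (Finset.filter_subset _ _)
    _ = n - k := Finset.card_range _

lemma Bset_subset (hlam : KStrictRect n k lam) : Bset n k lam ⊆ Finset.Icc (1 : ℤ) n := by
  intro x hx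
  rw [Bset, Finset.mem_image] at hx
  obtain ⟨t, ht, rfl⟩ := hx
  rw [topIdx, Finset.mem_filter, Finset.mem_range] at ht
  have h1 := ht.2
  have h2 := lamN_le_nk hlam t
  rw [Finset.mem_Icc]
  omega

lemma card_Bset (hlam : KStrictRect n k lam) : (Bset n k lam).card = rr n k lam := by
  rw [Bset, Finset.card_image_of_injOn, rr]
  intro a ha b hb hab
  simp only [Finset.coe_filter] at *
  rw [topIdx, Finset.mem_coe, Finset.mem_filter, Finset.mem_range] at ha hb
  have hlab : lamN n k lam a = lamN n k lam b := by omega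
  by_contra h
  rcases Nat.lt_or_ge a b with h' | h'
  · exact absurd hlab.symm (ne_of_lt (lam_strict hlam h' hb.1 hb.2))
  · rcases Nat.lt_or_ge b a with h'' | h''
    · exact absurd hlab (ne_of_lt (lam_strict hlam h'' ha.1 ha.2))
    · exact h (le_antisymm h'' h')

lemma card_IccZ (N : ℕ) : (Finset.Icc (1 : ℤ) N).card = N := by
  rw [Int.card_Icc]
  simp

lemma card_Rset (hlam : KStrictRect n k lam) : (Rset n k lam).card = n - rr n k lam := by
  rw [Rset, Finset.card_sdiff_of_subset (Bset_subset hlam), card_Bset hlam, card_IccZ]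

lemma rr_le_n (hlam : KStrictRect n k lam) (hkn : k ≤ n) : rr n k lam ≤ n :=
  le_trans (rr_le hlam) (Nat.sub_le _ _)

lemma idx_lt (hlam : KStrictRect n k lam) (hkn : k < n) {t : ℕ} (ht : t < n - k)
    (hle : lamN n k lam t ≤ k) : idx n k lam t < n - rr n k lam := by
  have hrt : rr n k lam ≤ t := by
    by_contra h
    push_neg at h
    have := (lt_rr_iff hlam ht).1 h
    omega
  rw [idx]
  omega

lemma cval_mem (hlam : KStrictRect n k lam) (hkn : k < n) {t : ℕ} (ht : t < n - k)
    (hle : lamN n k lam t ≤ k) : cval n k lam t ∈ Rset n k lam := by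
  rw [cval]
  exact nth_mem _ (by rw [card_Rset hlam]; exact idx_lt hlam hkn ht hle)

lemma idx_strictmono (hlam : KStrictRect n k lam) {t t' : ℕ} (h : t < t') (ht' : t' < n - k)
    (hle : lamN n k lam t ≤ k) : idx n k lam t < idx n k lam t' := by
  have hrt : rr n k lam ≤ t := by
    by_contra hc
    push_neg at hc
    have := (lt_rr_iff hlam (h.trans ht')).1 hc
    omega
  have h1 : lamN n k lam t' ≤ lamN n k lam t := lam_anti hlam h.le ht'
  rw [idx, idx]
  omega

lemma cval_strictmono (hlam : KStrictRect n k lam) (hkn : k < n) {t t' : ℕ} (h : t < t')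
    (ht' : t' < n - k) (hle : lamN n k lam t ≤ k) : cval n k lam t < cval n k lam t' := by
  have hle' : lamN n k lam t' ≤ k := le_trans (lam_anti hlam h.le ht') hle
  rw [cval, cval]
  exact nth_lt_nth _ (idx_strictmono hlam h ht' hle)
    (by rw [card_Rset hlam]; exact idx_lt hlam hkn ht' hle')

lemma Cset_subset (hlam : KStrictRect n k lam) (hkn : k < n) :
    Cset n k lam ⊆ Rset n k lam := by
  intro x hx
  rw [Cset, Finset.mem_image] at hx
  obtain ⟨t, ht, rfl⟩ := hx
  rw [Finset.mem_filter, Finset.mem_range] at ht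
  exact cval_mem hlam hkn ht.1 ht.2

lemma card_Cset (hlam : KStrictRect n k lam) (hkn : k < n) :
    (Cset n k lam).card = (n - k) - rr n k lam := by
  rw [Cset, Finset.card_image_of_injOn]
  · have key : (Finset.range (n - k)).filter (fun t => lamN n k lam t ≤ k) =
        Finset.range (n - k) \ topIdx n k lam := by
      rw [topIdx, ← Finset.filter_not]
      apply Finset.filter_congr
      intro t _
      simp only [not_lt, eq_iff_iff]
    rw [key, Finset.card_sdiff_of_subset (by rw [topIdx]; exact Finset.filter_subset _ _), Finset.card_range, ← rr]
  · intro a ha b hb hab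
    simp only [Finset.coe_filter, Set.mem_setOf_eq, Finset.mem_range] at ha hb
    by_contra h
    rcases Nat.lt_or_ge a b with h' | h'
    · exact absurd hab (ne_of_lt (cval_strictmono hlam hkn h' hb.1 ha.2))
    · rcases Nat.lt_or_ge b a with h'' | h''
      · exact absurd hab.symm (ne_of_lt (cval_strictmono hlam hkn h'' ha.1 hb.2))
      · exact h (le_antisymm h'' h')

lemma card_Dset (hlam : KStrictRect n k lam) (hkn : k < n) : (Dset n k lam).card = k := by
  rw [Dset, Finset.card_sdiff_of_subset (Cset_subset hlam hkn), card_Rset hlam, card_Cset hlam hkn]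
  have h1 := rr_le hlam
  omega

lemma Rset_subset : Rset n k lam ⊆ Finset.Icc (1 : ℤ) n := Finset.sdiff_subset

lemma Dset_subset' : Dset n k lam ⊆ Rset n k lam := Finset.sdiff_subset

end LamFacts

section Core

variable {n k : ℕ} {lam : Fin (n - k) → ℕ}

lemma Dset_subset_Icc (hlam : KStrictRect n k lam) (hkn : k < n) :
    Dset n k lam ⊆ Finset.Icc (1 : ℤ) n :=
  le_trans Dset_subset' Rset_subset

lemma core_first (hlam : KStrictRect n k lam) (hkn : k < n) {a : ℤ} (h1 : 1 ≤ a)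
    (h2 : a ≤ (k : ℤ)) : core n k lam a = nth (Dset n k lam) (a - 1).toNat ∧
      core n k lam a ∈ Dset n k lam := by
  rw [core, if_pos h2]
  refine ⟨rfl, nth_mem _ ?_⟩
  rw [card_Dset hlam hkn]
  omega

lemma core_second_neg (hlam : KStrictRect n k lam) {a : ℤ} (h1 : (k : ℤ) < a)
    (h2 : a ≤ (n : ℤ)) (hgt : k < lamN n k lam (a - (k : ℤ) - 1).toNat) :
    core n k lam a = (k : ℤ) - lamN n k lam (a - (k : ℤ) - 1).toNat ∧
      -(core n k lam a) ∈ Bset n k lam ∧ core n k lam a < 0 := by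
  have ht : (a - (k : ℤ) - 1).toNat < n - k := by omega
  rw [core, if_neg (by omega), if_pos hgt]
  refine ⟨rfl, ?_, by push_cast; omega⟩
  have : -((k : ℤ) - lamN n k lam (a - (k : ℤ) - 1).toNat) =
      (lamN n k lam (a - (k : ℤ) - 1).toNat : ℤ) - k := by ring
  rw [this, Bset]
  exact Finset.mem_image.2 ⟨_, Finset.mem_filter.2 ⟨Finset.mem_range.2 ht, hgt⟩, rfl⟩

lemma core_second_pos (hlam : KStrictRect n k lam) (hkn : k < n) {a : ℤ} (h1 : (k : ℤ) < a)
    (h2 : a ≤ (n : ℤ)) (hle : lamN n k lam (a - (k : ℤ) - 1).toNat ≤ k) :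
    core n k lam a = cval n k lam (a - (k : ℤ) - 1).toNat ∧
      core n k lam a ∈ Rset n k lam ∧ core n k lam a ∈ Cset n k lam := by
  have ht : (a - (k : ℤ) - 1).toNat < n - k := by omega
  rw [core, if_neg (by omega), if_neg (by omega)]
  refine ⟨rfl, cval_mem hlam hkn ht hle, ?_⟩
  exact Finset.mem_image.2 ⟨_, Finset.mem_filter.2 ⟨Finset.mem_range.2 ht, hle⟩, rfl⟩

lemma absCore_mem (hlam : KStrictRect n k lam) (hkn : k < n) {a : ℤ} (h1 : 1 ≤ a)
    (h2 : a ≤ (n : ℤ)) : |core n k lam a| ∈ Finset.Icc (1 : ℤ) n := by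
  rcases le_or_gt a (k : ℤ) with h | h
  · have hm := (core_first hlam hkn h1 h).2
    have := Dset_subset_Icc hlam hkn hm
    rw [Finset.mem_Icc] at this ⊢
    rw [abs_of_pos (by omega)]
    omega
  · rcases le_or_gt (lamN n k lam (a - (k : ℤ) - 1).toNat) k with hle | hgt
    · have hm := (core_second_pos hlam hkn h h2 hle).2.1
      have := Rset_subset hm
      rw [Finset.mem_Icc] at this ⊢
      rw [abs_of_pos (by omega)]
      omega
    · obtain ⟨he, hb, hneg⟩ := core_second_neg hlam h h2 hgt
      have := Bset_subset hlam hb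
      rwa [abs_of_neg hneg]

lemma Dset_not_mem_Bset (hlam : KStrictRect n k lam) {x : ℤ} (hx : x ∈ Dset n k lam) :
    x ∉ Bset n k lam := by
  have := Dset_subset' hx
  rw [Rset, Finset.mem_sdiff] at this
  exact this.2

lemma Rset_not_mem_Bset {x : ℤ} (hx : x ∈ Rset n k lam) : x ∉ Bset n k lam := by
  rw [Rset, Finset.mem_sdiff] at hx
  exact hx.2

lemma absCore_inj (hlam : KStrictRect n k lam) (hkn : k < n) {a a' : ℤ} (ha1 : 1 ≤ a)
    (ha2 : a ≤ (n : ℤ)) (hb1 : 1 ≤ a') (hb2 : a' ≤ (n : ℤ))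
    (he : |core n k lam a| = |core n k lam a'|) : a = a' := by
  have pos_abs : ∀ x : ℤ, x ∈ Finset.Icc (1 : ℤ) n → |x| = x := by
    intro x hx
    rw [Finset.mem_Icc] at hx
    exact abs_of_pos (by omega)
  rcases le_or_gt a (k : ℤ) with h | h <;> rcases le_or_gt a' (k : ℤ) with h' | h'
  · -- both in first block
    obtain ⟨e1, m1⟩ := core_first hlam hkn ha1 h
    obtain ⟨e2, m2⟩ := core_first hlam hkn hb1 h'
    rw [pos_abs _ (Dset_subset_Icc hlam hkn m1), pos_abs _ (Dset_subset_Icc hlam hkn m2),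
      e1, e2] at he
    have hcard : (Dset n k lam).card = k := card_Dset hlam hkn
    by_contra hne
    rcases lt_or_gt_of_ne hne with hlt | hlt
    · exact absurd he (ne_of_lt (nth_lt_nth _ (by omega) (by omega)))
    · exact absurd he.symm (ne_of_lt (nth_lt_nth _ (by omega) (by omega)))
  · -- a first, a' second
    obtain ⟨e1, m1⟩ := core_first hlam hkn ha1 h
    rw [pos_abs _ (Dset_subset_Icc hlam hkn m1)] at he
    rcases le_or_gt (lamN n k lam (a' - (k : ℤ) - 1).toNat) k with hle | hgt
    · obtain ⟨e2, m2, m2'⟩ := core_second_pos hlam hkn h' hb2 hle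
      rw [pos_abs _ (Rset_subset m2)] at he
      exfalso
      have : core n k lam a ∈ Cset n k lam := he ▸ m2'
      rw [Dset, Finset.mem_sdiff] at m1
      exact m1.2 this
    · obtain ⟨e2, m2, hneg⟩ := core_second_neg hlam h' hb2 hgt
      rw [abs_of_neg hneg] at he
      have hmm : core n k lam a ∈ Bset n k lam := by rw [he]; exact m2
      exact absurd hmm (Dset_not_mem_Bset hlam m1)
  · -- a second, a' first
    obtain ⟨e1, m1⟩ := core_first hlam hkn hb1 h'
    rw [pos_abs _ (Dset_subset_Icc hlam hkn m1)] at he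
    rcases le_or_gt (lamN n k lam (a - (k : ℤ) - 1).toNat) k with hle | hgt
    · obtain ⟨e2, m2, m2'⟩ := core_second_pos hlam hkn h ha2 hle
      rw [pos_abs _ (Rset_subset m2)] at he
      exfalso
      have : core n k lam a' ∈ Cset n k lam := he ▸ m2'
      rw [Dset, Finset.mem_sdiff] at m1
      exact m1.2 this
    · obtain ⟨e2, m2, hneg⟩ := core_second_neg hlam h ha2 hgt
      rw [abs_of_neg hneg] at he
      have hmm : core n k lam a' ∈ Bset n k lam := by rw [← he]; exact m2
      exact absurd hmm (Dset_not_mem_Bset hlam m1)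
  · -- both second block
    set t := (a - (k : ℤ) - 1).toNat with hta
    set t' := (a' - (k : ℤ) - 1).toNat with hta'
    have ht : t < n - k := by omega
    have ht' : t' < n - k := by omega
    have haa : a = (k : ℤ) + 1 + t := by omega
    have haa' : a' = (k : ℤ) + 1 + t' := by omega
    rcases le_or_gt (lamN n k lam t) k with hle | hgt <;>
      rcases le_or_gt (lamN n k lam t') k with hle' | hgt'
    · obtain ⟨e1, m1, _⟩ := core_second_pos hlam hkn h ha2 hle
      obtain ⟨e2, m2, _⟩ := core_second_pos hlam hkn h' hb2 hle'
      rw [pos_abs _ (Rset_subset m1), pos_abs _ (Rset_subset m2), e1, e2] at he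
      by_contra hne
      have htne : t ≠ t' := by omega
      rcases lt_or_gt_of_ne htne with hlt | hlt
      · exact absurd he (ne_of_lt (cval_strictmono hlam hkn hlt ht' hle))
      · exact absurd he.symm (ne_of_lt (cval_strictmono hlam hkn hlt ht hle'))
    · obtain ⟨e1, m1, _⟩ := core_second_pos hlam hkn h ha2 hle
      obtain ⟨e2, m2, hneg⟩ := core_second_neg hlam h' hb2 hgt'
      rw [pos_abs _ (Rset_subset m1), abs_of_neg hneg] at he
      have hmm : core n k lam a ∈ Bset n k lam := by rw [he]; exact m2
      exact absurd hmm (Rset_not_mem_Bset m1)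
    · obtain ⟨e1, m1, hneg⟩ := core_second_neg hlam h ha2 hgt
      obtain ⟨e2, m2, _⟩ := core_second_pos hlam hkn h' hb2 hle'
      rw [pos_abs _ (Rset_subset m2), abs_of_neg hneg] at he
      have hmm : core n k lam a' ∈ Bset n k lam := by rw [← he]; exact m1
      exact absurd hmm (Rset_not_mem_Bset m2)
    · obtain ⟨e1, m1, hneg⟩ := core_second_neg hlam h ha2 hgt
      obtain ⟨e2, m2, hneg'⟩ := core_second_neg hlam h' hb2 hgt'
      rw [← hta] at e1
      rw [← hta'] at e2
      rw [abs_of_neg hneg, abs_of_neg hneg', e1, e2] at he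
      have hll : lamN n k lam t = lamN n k lam t' := by omega
      by_contra hne
      have htne : t ≠ t' := by omega
      rcases lt_or_gt_of_ne htne with hlt | hlt
      · exact absurd hll.symm (ne_of_lt (lam_strict hlam hlt ht' hgt'))
      · exact absurd hll (ne_of_lt (lam_strict hlam hlt ht hgt))

lemma absCore_surj (hlam : KStrictRect n k lam) (hkn : k < n) {v : ℤ}
    (hv : v ∈ Finset.Icc (1 : ℤ) n) : ∃ a, 1 ≤ a ∧ a ≤ (n : ℤ) ∧ |core n k lam a| = v := by
  have := Finset.surj_on_of_inj_on_of_card_le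
    (s := Finset.Icc (1 : ℤ) n) (t := Finset.Icc (1 : ℤ) n)
    (fun a _ => |core n k lam a|)
    (fun a ha => by
      rw [Finset.mem_Icc] at ha
      exact absCore_mem hlam hkn ha.1 ha.2)
    (fun a₁ a₂ ha₁ ha₂ hee => by
      rw [Finset.mem_Icc] at ha₁ ha₂
      exact absCore_inj hlam hkn ha₁.1 ha₁.2 ha₂.1 ha₂.2 hee)
    le_rfl v hv
  obtain ⟨a, ha, hav⟩ := this
  rw [Finset.mem_Icc] at ha
  exact ⟨a, ha.1, ha.2, hav.symm⟩

lemma uraw_odd (lam : Fin (n - k) → ℕ) (a : ℤ) : uraw n k lam (-a) = -uraw n k lam a := by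
  simp only [uraw, neg_neg]
  split_ifs <;> (try ring) <;> (exfalso; omega)

lemma uraw_out (lam : Fin (n - k) → ℕ) {a : ℤ} (ha : a = 0 ∨ (n : ℤ) < a ∨ a < -(n : ℤ)) :
    uraw n k lam a = a := by
  rw [uraw, if_neg (by omega), if_neg (by omega)]

lemma uraw_zero (lam : Fin (n - k) → ℕ) : uraw n k lam 0 = 0 := by
  norm_num [uraw]

lemma uraw_pos_range (lam : Fin (n - k) → ℕ) {a : ℤ} (h1 : 1 ≤ a)
    (h2 : a ≤ (n : ℤ)) : uraw n k lam a = core n k lam a := by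
  rw [uraw, if_pos ⟨h1, h2⟩]

lemma uraw_abs (lam : Fin (n - k) → ℕ) {a : ℤ} (h1 : 1 ≤ |a|) (h2 : |a| ≤ (n : ℤ)) :
    |uraw n k lam a| = |core n k lam (|a|)| := by
  rcases abs_cases a with ⟨e, hp⟩ | ⟨e, hneg⟩
  · rw [e] at h1 h2 ⊢
    rw [uraw_pos_range lam h1 h2]
  · rw [e] at h1 h2 ⊢
    rw [uraw, if_neg (by omega), if_pos ⟨by omega, by omega⟩, abs_neg]

lemma uraw_bij (hlam : KStrictRect n k lam) (hkn : k < n) :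
    Function.Bijective (uraw n k lam) := by
  have habs : ∀ a : ℤ, 1 ≤ a → a ≤ (n : ℤ) → 1 ≤ |core n k lam a| ∧ |core n k lam a| ≤ n := by
    intro a ha1 ha2
    have := absCore_mem hlam hkn ha1 ha2
    rw [Finset.mem_Icc] at this
    exact this
  constructor
  · intro a a' he
    by_cases ha : 1 ≤ |a| ∧ |a| ≤ (n : ℤ)
    · by_cases ha' : 1 ≤ |a'| ∧ |a'| ≤ (n : ℤ)
      · have e1 := uraw_abs lam (a := a) ha.1 ha.2
        have e2 := uraw_abs lam (a := a') ha'.1 ha'.2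
        have he' : |core n k lam (|a|)| = |core n k lam (|a'|)| := by rw [← e1, ← e2, he]
        have habseq : |a| = |a'| := absCore_inj hlam hkn ha.1 ha.2 ha'.1 ha'.2 he'
        rcases abs_eq_abs.1 habseq with h | h
        · exact h
        · exfalso
          have hne : a' = -a := by omega
          rw [hne, uraw_odd] at he
          have h0 : uraw n k lam a = 0 := by omega
          have hb := (habs (|a|) ha.1 ha.2).1
          rw [← e1, h0] at hb
          simp at hb
      · exfalso
        have hout : uraw n k lam a' = a' :=
          uraw_out lam (by rcases abs_cases a' with ⟨e, _⟩ | ⟨e, _⟩ <;> omega)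
        have e1 := uraw_abs lam (a := a) ha.1 ha.2
        have hb := habs (|a|) ha.1 ha.2
        rw [← e1, he, hout] at hb
        rcases abs_cases a' with ⟨e, _⟩ | ⟨e, _⟩ <;> omega
    · by_cases ha' : 1 ≤ |a'| ∧ |a'| ≤ (n : ℤ)
      · exfalso
        have hout : uraw n k lam a = a :=
          uraw_out lam (by rcases abs_cases a with ⟨e, _⟩ | ⟨e, _⟩ <;> omega)
        have e2 := uraw_abs lam (a := a') ha'.1 ha'.2
        have hb := habs (|a'|) ha'.1 ha'.2
        rw [← e2, ← he, hout] at hb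
        rcases abs_cases a with ⟨e, _⟩ | ⟨e, _⟩ <;> omega
      · have h1 : uraw n k lam a = a :=
          uraw_out lam (by rcases abs_cases a with ⟨e, _⟩ | ⟨e, _⟩ <;> omega)
        have h2 : uraw n k lam a' = a' :=
          uraw_out lam (by rcases abs_cases a' with ⟨e, _⟩ | ⟨e, _⟩ <;> omega)
        rw [h1, h2] at he
        exact he
  · intro v
    by_cases hv : 1 ≤ |v| ∧ |v| ≤ (n : ℤ)
    · obtain ⟨a, h1, h2, hav⟩ := absCore_surj hlam hkn
        (v := |v|) (Finset.mem_Icc.2 ⟨hv.1, hv.2⟩)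
      rcases abs_cases (core n k lam a) with ⟨e, _⟩ | ⟨e, _⟩ <;>
        rcases abs_cases v with ⟨ev, hvp⟩ | ⟨ev, hvn⟩
      · exact ⟨a, by rw [uraw_pos_range lam h1 h2]; omega⟩
      · refine ⟨-a, ?_⟩
        rw [uraw, if_neg (by omega), if_pos ⟨by omega, by omega⟩, neg_neg]
        omega
      · refine ⟨-a, ?_⟩
        rw [uraw, if_neg (by omega), if_pos ⟨by omega, by omega⟩, neg_neg]
        omega
      · exact ⟨a, by rw [uraw_pos_range lam h1 h2]; omega⟩
    · exact ⟨v, uraw_out lam (by rcases abs_cases v with ⟨e, _⟩ | ⟨e, _⟩ <;> omega)⟩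

open Classical in
lemma gmap_apply (hlam : KStrictRect n k lam) (hkn : k < n) (a : ℤ) :
    gmap n k lam a = uraw n k lam a := by
  rw [gmap, dif_pos (uraw_bij hlam hkn)]
  rfl

end Core

section Stage4

variable {n k : ℕ} {lam : Fin (n - k) → ℕ}

lemma gmap_chain (hlam : KStrictRect n k lam) (hkn : k < n) :
    ∀ i : ℤ, 1 ≤ i → i + 1 ≤ (n : ℤ) → i ≠ (k : ℤ) →
      uraw n k lam i < uraw n k lam (i + 1) := by
  intro i h1 h2 hne
  rw [uraw_pos_range lam h1 (by omega), uraw_pos_range lam (by omega) h2]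
  rcases le_or_gt (i + 1) (k : ℤ) with hc | hc
  · obtain ⟨e1, m1⟩ := core_first hlam hkn h1 (by omega)
    obtain ⟨e2, m2⟩ := core_first hlam hkn (a := i + 1) (by omega) hc
    rw [e1, e2]
    have hcard : (Dset n k lam).card = k := card_Dset hlam hkn
    exact nth_lt_nth _ (by omega) (by omega)
  · have hki : (k : ℤ) < i := by omega
    have htt : (i + 1 - (k : ℤ) - 1).toNat = (i - (k : ℤ) - 1).toNat + 1 := by omega
    have ht : (i - (k : ℤ) - 1).toNat < n - k := by omega
    have ht' : (i - (k : ℤ) - 1).toNat + 1 < n - k := by omega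
    rcases le_or_gt (lamN n k lam ((i - (k : ℤ) - 1).toNat + 1)) k with hle' | hgt' <;>
      rcases le_or_gt (lamN n k lam ((i - (k : ℤ) - 1).toNat)) k with hle | hgt
    · obtain ⟨e1, m1, _⟩ := core_second_pos hlam hkn hki (by omega) hle
      obtain ⟨e2, m2, _⟩ := core_second_pos hlam hkn (a := i + 1) (by omega) h2
        (by rw [htt]; exact hle')
      rw [e1, e2, htt]
      exact cval_strictmono hlam hkn (by omega) ht' hle
    · obtain ⟨e1, m1, hneg⟩ := core_second_neg hlam hki (by omega) hgt
      obtain ⟨e2, m2, _⟩ := core_second_pos hlam hkn (a := i + 1) (by omega) h2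
        (by rw [htt]; exact hle')
      have := Rset_subset m2
      rw [Finset.mem_Icc] at this
      omega
    · exfalso
      have := lam_anti hlam (t := (i - (k : ℤ) - 1).toNat)
        (t' := (i - (k : ℤ) - 1).toNat + 1) (by omega) ht'
      omega
    · obtain ⟨e1, m1, hneg⟩ := core_second_neg hlam hki (by omega) hgt
      obtain ⟨e2, m2, hneg'⟩ := core_second_neg hlam (a := i + 1) (by omega) h2
        (by rw [htt]; exact hgt')
      rw [e1, e2, htt]
      have := lam_strict hlam (t := (i - (k : ℤ) - 1).toNat)
        (t' := (i - (k : ℤ) - 1).toNat + 1) (by omega) ht' hgt'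
      omega

lemma gmap_mem (hlam : KStrictRect n k lam) (hkn : k < n) :
    gmap n k lam ∈ SignedPerms n ∧ IsKGrassmannian n k (gmap n k lam) := by
  refine ⟨⟨?_, ?_⟩, ?_, ?_⟩
  · intro a
    rw [gmap_apply hlam hkn, gmap_apply hlam hkn, uraw_odd]
  · intro a ha
    rw [gmap_apply hlam hkn]
    exact uraw_out lam (by rcases abs_cases a with ⟨e, _⟩ | ⟨e, _⟩ <;> omega)
  · intro hk1
    rw [gmap_apply hlam hkn, uraw_pos_range lam le_rfl (by omega)]
    obtain ⟨e, m⟩ := core_first hlam hkn le_rfl (by exact_mod_cast hk1)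
    have := Dset_subset_Icc hlam hkn m
    rw [Finset.mem_Icc] at this
    omega
  · intro i h1 h2 hne
    rw [gmap_apply hlam hkn, gmap_apply hlam hkn]
    exact gmap_chain hlam hkn i h1 h2 hne

lemma filter_card_split {s t : Finset ℤ} (hts : t ⊆ s) (p : ℤ → Prop) [DecidablePred p] :
    (s.filter p).card = ((s \ t).filter p).card + (t.filter p).card := by
  have hu : (s \ t).filter p ∪ t.filter p = s.filter p := by
    rw [← Finset.filter_union, Finset.sdiff_union_of_subset hts]
  rw [← hu, Finset.card_union_of_disjoint
    (Finset.disjoint_filter_filter Finset.sdiff_disjoint)]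

lemma count_gt {s : Finset ℤ} {c : ℤ} (hc : c ∉ s) :
    (s.filter (fun x => c < x)).card = s.card - (s.filter (fun x => x < c)).card := by
  have h := Finset.card_filter_add_card_filter_not (s := s) (p := fun x => x < c)
  have he : s.filter (fun x => ¬ x < c) = s.filter (fun x => c < x) := by
    apply Finset.filter_congr
    intro x hx
    have : x ≠ c := fun h' => hc (h' ▸ hx)
    constructor
    · intro h'; exact lt_of_le_of_ne (not_lt.1 h') (Ne.symm this)
    · intro h'; omega
  rw [he] at h
  omega

lemma Cset_filter_lt (hlam : KStrictRect n k lam) (hkn : k < n) {t0 : ℕ} (ht0 : t0 < n - k)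
    (hle0 : lamN n k lam t0 ≤ k) :
    ((Cset n k lam).filter (fun x => x < cval n k lam t0)).card = t0 - rr n k lam := by
  have himg : (Cset n k lam).filter (fun x => x < cval n k lam t0) =
      (((Finset.range (n - k)).filter (fun t => lamN n k lam t ≤ k)).filter
        (fun t => t < t0)).image (cval n k lam) := by
    ext x
    simp only [Cset, Finset.mem_filter, Finset.mem_image, Finset.mem_range]
    constructor
    · rintro ⟨⟨t, ⟨htm, htle⟩, rfl⟩, hlt⟩
      refine ⟨t, ⟨⟨htm, htle⟩, ?_⟩, rfl⟩
      by_contra hge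
      push_neg at hge
      rcases eq_or_lt_of_le hge with h | h
      · subst h; exact lt_irrefl _ hlt
      · exact absurd (cval_strictmono hlam hkn h htm hle0) (not_lt.2 hlt.le)
    · rintro ⟨t, ⟨⟨htm, htle⟩, hlt⟩, rfl⟩
      exact ⟨⟨t, ⟨htm, htle⟩, rfl⟩, cval_strictmono hlam hkn hlt ht0 htle⟩
  rw [himg, Finset.card_image_of_injOn]
  · have : ((Finset.range (n - k)).filter (fun t => lamN n k lam t ≤ k)).filter
        (fun t => t < t0) = Finset.Ico (rr n k lam) t0 := by
      ext t
      simp only [Finset.mem_filter, Finset.mem_range, Finset.mem_Ico]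
      constructor
      · rintro ⟨⟨htm, htle⟩, hlt⟩
        refine ⟨?_, hlt⟩
        by_contra h
        push_neg at h
        have := (lt_rr_iff hlam htm).1 h
        omega
      · rintro ⟨hge, hlt⟩
        have htm : t < n - k := by omega
        refine ⟨⟨htm, ?_⟩, hlt⟩
        by_contra h
        push_neg at h
        have := (lt_rr_iff hlam htm).2 h
        omega
    rw [this, Nat.card_Ico]
  · intro a ha b hb hab
    simp only [Finset.coe_filter, Set.mem_setOf_eq, Finset.mem_filter, Finset.mem_range] at ha hb
    by_contra hne
    rcases Nat.lt_or_ge a b with h' | h'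
    · exact absurd hab (ne_of_lt (cval_strictmono hlam hkn h' hb.1.1 ha.1.2))
    · rcases Nat.lt_or_ge b a with h'' | h''
      · exact absurd hab.symm (ne_of_lt (cval_strictmono hlam hkn h'' ha.1.1 hb.1.2))
      · exact hne (le_antisymm h'' h')

lemma Dset_filter_gt (hlam : KStrictRect n k lam) (hkn : k < n) {t0 : ℕ} (ht0 : t0 < n - k)
    (hle0 : lamN n k lam t0 ≤ k) :
    ((Dset n k lam).filter (fun x => cval n k lam t0 < x)).card = lamN n k lam t0 := by
  have hrrt : rr n k lam ≤ t0 := by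
    by_contra h
    push_neg at h
    have := (lt_rr_iff hlam ht0).1 h
    omega
  have hcC : cval n k lam t0 ∈ Cset n k lam :=
    Finset.mem_image.2 ⟨t0, Finset.mem_filter.2 ⟨Finset.mem_range.2 ht0, hle0⟩, rfl⟩
  have hcD : cval n k lam t0 ∉ Dset n k lam := by
    rw [Dset, Finset.mem_sdiff]
    push_neg
    intro _
    exact hcC
  have hsplit := filter_card_split (s := Rset n k lam) (t := Cset n k lam)
    (Cset_subset hlam hkn) (fun x => x < cval n k lam t0)
  have hR : ((Rset n k lam).filter (fun x => x < cval n k lam t0)).card = idx n k lam t0 := by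
    rw [cval] at *
    exact rank_nth _ (by rw [card_Rset hlam]; exact idx_lt hlam hkn ht0 hle0)
  have hC := Cset_filter_lt hlam hkn ht0 hle0
  have hidx : idx n k lam t0 = (t0 - rr n k lam) + (k - lamN n k lam t0) := rfl
  have hDlt : ((Dset n k lam).filter (fun x => x < cval n k lam t0)).card
      = k - lamN n k lam t0 := by
    rw [Dset] at *
    omega
  have := count_gt hcD
  rw [card_Dset hlam hkn] at this
  omega

lemma fmap_gmap (hlam : KStrictRect n k lam) (hkn : k < n) :
    fmap n k (gmap n k lam) = lam := by
  funext j
  have hj : (j : ℕ) < n - k := j.isLt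
  have hp1 : (1 : ℤ) ≤ (k : ℤ) + 1 + (j : ℕ) := by omega
  have hp2 : (k : ℤ) + 1 + (j : ℕ) ≤ (n : ℤ) := by omega
  have ht : ((k : ℤ) + 1 + (j : ℕ) - (k : ℤ) - 1).toNat = (j : ℕ) := by omega
  have hlamj : lamN n k lam (j : ℕ) = lam j := by
    rw [lamN, dif_pos hj]
  have hgap : ∀ a : ℤ, 1 ≤ a → a ≤ (n : ℤ) →
      gmap n k lam a = core n k lam a := fun a h1 h2 => by
    rw [gmap_apply hlam hkn, uraw_pos_range lam h1 h2]
  rcases le_or_gt (lamN n k lam (j : ℕ)) k with hle | hgt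
  · obtain ⟨e, mR, mC⟩ := core_second_pos hlam hkn (a := (k : ℤ) + 1 + (j : ℕ))
      (by omega) hp2 (by rw [ht]; exact hle)
    rw [ht] at e
    have hpos : 0 < core n k lam ((k : ℤ) + 1 + (j : ℕ)) := by
      have := Rset_subset mR
      rw [Finset.mem_Icc] at this
      omega
    rw [fmap, if_neg (by rw [hgap _ hp1 hp2]; omega)]
    have hcount : ((Finset.Icc 1 k).filter
        (fun i : ℕ => gmap n k lam ((k : ℤ) + 1 + (j : ℕ)) < gmap n k lam (i : ℕ))).card =
        ((Dset n k lam).filter (fun x => cval n k lam (j : ℕ) < x)).card := by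
      apply Finset.card_bij (fun i _ => nth (Dset n k lam) (i - 1))
      · intro i hi
        rw [Finset.mem_filter, Finset.mem_Icc] at hi
        obtain ⟨⟨hi1, hi2⟩, hip⟩ := hi
        obtain ⟨ei, mi⟩ := core_first hlam hkn (a := (i : ℕ)) (by exact_mod_cast hi1)
          (by exact_mod_cast hi2)
        have hit : ((i : ℤ) - 1).toNat = i - 1 := by omega
        rw [hgap _ hp1 hp2, e] at hip
        rw [hgap _ (by exact_mod_cast hi1) (by push_cast; omega), ei, hit] at hip
        rw [Finset.mem_filter]
        rw [ei, hit] at mi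
        exact ⟨mi, hip⟩
      · intro a ha b hb hab
        rw [Finset.mem_filter, Finset.mem_Icc] at ha hb
        have hcard : (Dset n k lam).card = k := card_Dset hlam hkn
        by_contra hne
        rcases Nat.lt_or_ge a b with h' | h'
        · exact absurd hab (ne_of_lt (nth_lt_nth _ (by omega) (by omega)))
        · rcases Nat.lt_or_ge b a with h'' | h''
          · exact absurd hab.symm (ne_of_lt (nth_lt_nth _ (by omega) (by omega)))
          · exact hne (le_antisymm h'' h')
      · intro x hx
        rw [Finset.mem_filter] at hx
        obtain ⟨hxD, hxgt⟩ := hx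
        obtain ⟨t, htc, rfl⟩ := exists_nth _ hxD
        have hcard : (Dset n k lam).card = k := card_Dset hlam hkn
        refine ⟨t + 1, Finset.mem_filter.2 ⟨Finset.mem_Icc.2 ⟨by omega, by omega⟩, ?_⟩,
          by rw [Nat.add_sub_cancel]⟩
        obtain ⟨ei, mi⟩ := core_first hlam hkn (a := ((t + 1 : ℕ) : ℤ)) (by push_cast; omega)
          (by push_cast; omega)
        have hit : (((t + 1 : ℕ) : ℤ) - 1).toNat = t := by omega
        rw [hgap _ hp1 hp2, e, hgap _ (by push_cast; omega) (by push_cast; omega), ei, hit]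
        exact hxgt
    rw [hcount, Dset_filter_gt hlam hkn hj hle, hlamj]
  · obtain ⟨e, mB, hneg⟩ := core_second_neg hlam (a := (k : ℤ) + 1 + (j : ℕ)) (by omega) hp2
      (by rw [ht]; exact hgt)
    rw [ht] at e
    rw [fmap, if_pos (by rw [hgap _ hp1 hp2]; omega), hgap _ hp1 hp2, e]
    rw [← hlamj]
    omega

end Stage4

section Stage5

variable {n k : ℕ} {w : Equiv.Perm ℤ}

lemma w_zero (hsp : w ∈ SignedPerms n) : w 0 = 0 := by
  have := hsp.1 0
  rw [neg_zero] at this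
  omega

lemma w_abs_le (hsp : w ∈ SignedPerms n) {a : ℤ} (ha : |a| ≤ (n : ℤ)) : |w a| ≤ (n : ℤ) := by
  by_contra h
  push_neg at h
  have h2 := hsp.2 (w a) h
  have h3 := w.injective h2
  rw [h3] at h
  exact absurd ha (not_le.2 h)

lemma w_ne_zero (hsp : w ∈ SignedPerms n) {a : ℤ} (ha : a ≠ 0) : w a ≠ 0 := by
  intro h
  have : w a = w 0 := by rw [h, w_zero hsp]
  exact ha (w.injective this)

lemma w_block1 (hgr : IsKGrassmannian n k w) (hkn : k < n) :
    ∀ i i' : ℤ, 1 ≤ i → i < i' → i' ≤ (k : ℤ) → w i < w i' := by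
  intro i i' h1 h2 h3
  refine chainZ (w := fun a => w a) (lo := 1) (hi := (k : ℤ)) ?_ i i' h1 h2 h3
  intro a ha1 ha2
  exact hgr.2 a ha1 (by omega) (by omega)

lemma w_block1_pos (hgr : IsKGrassmannian n k w) (hkn : k < n) {i : ℤ} (h1 : 1 ≤ i)
    (h2 : i ≤ (k : ℤ)) : 0 < w i := by
  have hk1 : 1 ≤ k := by omega
  have hw1 := hgr.1 hk1
  rcases eq_or_lt_of_le h1 with h | h
  · rw [← h]; exact hw1
  · exact hw1.trans (w_block1 hgr hkn 1 i le_rfl h h2)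

lemma w_block2 (hgr : IsKGrassmannian n k w) :
    ∀ p p' : ℤ, (k : ℤ) + 1 ≤ p → p < p' → p' ≤ (n : ℤ) → w p < w p' := by
  intro p p' h1 h2 h3
  refine chainZ (w := fun a => w a) (lo := (k : ℤ) + 1) (hi := (n : ℤ)) ?_ p p' h1 h2 h3
  intro a ha1 ha2
  exact hgr.2 a (by omega) ha2 (by omega)

noncomputable def DW (k : ℕ) (w : Equiv.Perm ℤ) : Finset ℤ := (Finset.Icc (1 : ℤ) k).image w

noncomputable def PW (n k : ℕ) (w : Equiv.Perm ℤ) : Finset ℤ :=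
  ((Finset.Icc ((k : ℤ) + 1) n).filter (fun p => 0 < w p)).image w

noncomputable def NW (n k : ℕ) (w : Equiv.Perm ℤ) : Finset ℤ :=
  ((Finset.Icc ((k : ℤ) + 1) n).filter (fun p => w p < 0)).image (fun p => -w p)

lemma card_DW : (DW k w).card = k := by
  rw [DW, Finset.card_image_of_injective _ w.injective, Int.card_Icc]
  simp

lemma DW_subset (hsp : w ∈ SignedPerms n) (hgr : IsKGrassmannian n k w) (hkn : k < n) :
    DW k w ⊆ Finset.Icc (1 : ℤ) n := by
  intro x hx
  rw [DW, Finset.mem_image] at hx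
  obtain ⟨i, hi, rfl⟩ := hx
  rw [Finset.mem_Icc] at hi ⊢
  have h1 := w_block1_pos hgr hkn hi.1 hi.2
  have h2 := w_abs_le hsp (a := i) (by rw [abs_le]; constructor <;> omega)
  rw [abs_le] at h2
  omega

lemma PW_subset (hsp : w ∈ SignedPerms n) : PW n k w ⊆ Finset.Icc (1 : ℤ) n := by
  intro x hx
  rw [PW, Finset.mem_image] at hx
  obtain ⟨p, hp, rfl⟩ := hx
  rw [Finset.mem_filter, Finset.mem_Icc] at hp
  have h2 := w_abs_le hsp (a := p) (by rw [abs_le]; constructor <;> omega)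
  rw [abs_le] at h2
  rw [Finset.mem_Icc]
  omega

lemma NW_subset (hsp : w ∈ SignedPerms n) : NW n k w ⊆ Finset.Icc (1 : ℤ) n := by
  intro x hx
  rw [NW, Finset.mem_image] at hx
  obtain ⟨p, hp, rfl⟩ := hx
  rw [Finset.mem_filter, Finset.mem_Icc] at hp
  have h2 := w_abs_le hsp (a := p) (by rw [abs_le]; constructor <;> omega)
  rw [abs_le] at h2
  rw [Finset.mem_Icc]
  omega

lemma card_PW_NW (hsp : w ∈ SignedPerms n) (hkn : k < n) :
    (PW n k w).card + (NW n k w).card = n - k := by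
  have h1 : (PW n k w).card = ((Finset.Icc ((k : ℤ) + 1) n).filter (fun p => 0 < w p)).card :=
    Finset.card_image_of_injective _ w.injective
  have h2 : (NW n k w).card = ((Finset.Icc ((k : ℤ) + 1) n).filter (fun p => w p < 0)).card :=
    Finset.card_image_of_injOn (fun a _ b _ hab => w.injective (by omega))
  have h3 := Finset.card_filter_add_card_filter_not
    (s := Finset.Icc ((k : ℤ) + 1) n) (p := fun p => 0 < w p)
  have h4 : (Finset.Icc ((k : ℤ) + 1) n).filter (fun p => ¬ 0 < w p) =
      (Finset.Icc ((k : ℤ) + 1) n).filter (fun p => w p < 0) := by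
    apply Finset.filter_congr
    intro p hp
    rw [Finset.mem_Icc] at hp
    have := w_ne_zero hsp (a := p) (by omega)
    constructor <;> intro <;> omega
  have h5 : (Finset.Icc ((k : ℤ) + 1) n).card = n - k := by
    rw [Int.card_Icc]
    omega
  rw [h4] at h3
  omega

lemma disj_DW_PW : Disjoint (DW k w) (PW n k w) := by
  rw [Finset.disjoint_left]
  intro x hx hx'
  rw [DW, Finset.mem_image] at hx
  rw [PW, Finset.mem_image] at hx'
  obtain ⟨i, hi, rfl⟩ := hx
  obtain ⟨p, hp, hpe⟩ := hx'
  have := w.injective hpe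
  rw [Finset.mem_Icc] at hi
  rw [Finset.mem_filter, Finset.mem_Icc] at hp
  omega

lemma disj_DW_NW (hsp : w ∈ SignedPerms n) : Disjoint (DW k w) (NW n k w) := by
  rw [Finset.disjoint_left]
  intro x hx hx'
  rw [DW, Finset.mem_image] at hx
  rw [NW, Finset.mem_image] at hx'
  obtain ⟨i, hi, rfl⟩ := hx
  obtain ⟨p, hp, hpe⟩ := hx'
  have : w (-p) = w i := by rw [hsp.1 p, hpe]
  have := w.injective this
  rw [Finset.mem_Icc] at hi
  rw [Finset.mem_filter, Finset.mem_Icc] at hp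
  omega

lemma disj_PW_NW (hsp : w ∈ SignedPerms n) : Disjoint (PW n k w) (NW n k w) := by
  rw [Finset.disjoint_left]
  intro x hx hx'
  rw [PW, Finset.mem_image] at hx
  rw [NW, Finset.mem_image] at hx'
  obtain ⟨q, hq, rfl⟩ := hx
  obtain ⟨p, hp, hpe⟩ := hx'
  have : w (-p) = w q := by rw [hsp.1 p, hpe]
  have := w.injective this
  rw [Finset.mem_filter, Finset.mem_Icc] at hq hp
  omega

lemma union_DPN (hsp : w ∈ SignedPerms n) (hgr : IsKGrassmannian n k w) (hkn : k < n) :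
    DW k w ∪ PW n k w ∪ NW n k w = Finset.Icc (1 : ℤ) n := by
  apply Finset.eq_of_subset_of_card_le
  · intro x hx
    rcases Finset.mem_union.1 hx with hx | hx
    · rcases Finset.mem_union.1 hx with hx | hx
      · exact DW_subset hsp hgr hkn hx
      · exact PW_subset hsp hx
    · exact NW_subset hsp hx
  · have hc := card_PW_NW hsp hkn
    rw [card_IccZ, Finset.card_union_of_disjoint
        (by rw [Finset.disjoint_union_left]; exact ⟨disj_DW_NW hsp, disj_PW_NW hsp⟩),
      Finset.card_union_of_disjoint disj_DW_PW, card_DW]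
    omega

lemma lamN_fmap {t : ℕ} (ht : t < n - k) : lamN n k (fmap n k w) t =
    if w ((k : ℤ) + 1 + t) < 0 then k + (-(w ((k : ℤ) + 1 + t))).toNat
    else ((Finset.Icc 1 k).filter (fun i : ℕ => w ((k : ℤ) + 1 + t) < w (i : ℕ))).card := by
  rw [lamN, dif_pos ht]
  rfl

lemma count_le_k (v : ℤ) :
    ((Finset.Icc 1 k).filter (fun i : ℕ => v < w (i : ℕ))).card ≤ k := by
  calc _ ≤ (Finset.Icc 1 k).card := Finset.card_le_card (Finset.filter_subset _ _)
    _ = k := by rw [Nat.card_Icc]; omega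

lemma fmap_gt_iff {t : ℕ} (ht : t < n - k) :
    (k < lamN n k (fmap n k w) t ↔ w ((k : ℤ) + 1 + t) < 0) := by
  rw [lamN_fmap ht]
  split_ifs with h
  · constructor
    · intro _; exact h
    · intro _; omega
  · constructor
    · intro hlt
      exfalso
      have := count_le_k (k := k) (w := w) (w ((k : ℤ) + 1 + t))
      omega
    · intro h'; exact absurd h' h

lemma fmap_mem (hsp : w ∈ SignedPerms n) (hgr : IsKGrassmannian n k w) (hkn : k < n) :
    KStrictRect n k (fmap n k w) := by
  have hstep : ∀ t : ℕ, t + 1 < n - k →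
      lamN n k (fmap n k w) (t + 1) ≤ lamN n k (fmap n k w) t := by
    intro t ht
    have hcast : ((k : ℤ) + 1 + (t + 1 : ℕ)) = ((k : ℤ) + 1 + t) + 1 := by push_cast; ring
    have hwlt : w ((k : ℤ) + 1 + t) < w (((k : ℤ) + 1 + t) + 1) :=
      hgr.2 _ (by omega) (by omega) (by omega)
    rw [lamN_fmap (by omega), lamN_fmap (by omega), hcast]
    split_ifs with h1 h2 h2
    · omega
    · exfalso; omega
    · have := count_le_k (k := k) (w := w) (w (((k : ℤ) + 1 + t) + 1))
      omega
    · apply Finset.card_le_card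
      intro i hi
      rw [Finset.mem_filter] at hi ⊢
      exact ⟨hi.1, hwlt.trans hi.2⟩
  have hmono : ∀ t t' : ℕ, t ≤ t' → t' < n - k →
      lamN n k (fmap n k w) t' ≤ lamN n k (fmap n k w) t := by
    intro t t'
    induction t' with
    | zero =>
      intro h h'
      have : t = 0 := by omega
      rw [this]
    | succ u ih =>
      intro h h'
      rcases Nat.lt_or_ge t (u + 1) with hc | hc
      · exact le_trans (hstep u (by omega)) (ih (by omega) (by omega))
      · have : t = u + 1 := by omega
        rw [this]
  constructor
  · intro i j hij
    have := hmono (i : ℕ) (j : ℕ) (by exact_mod_cast hij) j.isLt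
    rw [lamN, dif_pos j.isLt, lamN, dif_pos i.isLt] at this
    simpa using this
  constructor
  · intro i j hij hgt heq
    have hi' : k < lamN n k (fmap n k w) (i : ℕ) := by
      rw [lamN, dif_pos i.isLt]
      simpa using hgt
    have hj' : k < lamN n k (fmap n k w) (j : ℕ) := by
      rw [lamN, dif_pos j.isLt]
      have : fmap n k w j = fmap n k w i := heq.symm
      rw [this]
      simpa using hgt
    have hnegi : w ((k : ℤ) + 1 + (i : ℕ)) < 0 := (fmap_gt_iff i.isLt).1 hi'
    have hnegj : w ((k : ℤ) + 1 + (j : ℕ)) < 0 := (fmap_gt_iff j.isLt).1 hj'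
    have ei : lamN n k (fmap n k w) (i : ℕ) = k + (-(w ((k : ℤ) + 1 + (i : ℕ)))).toNat := by
      rw [lamN_fmap i.isLt, if_pos hnegi]
    have ej : lamN n k (fmap n k w) (j : ℕ) = k + (-(w ((k : ℤ) + 1 + (j : ℕ)))).toNat := by
      rw [lamN_fmap j.isLt, if_pos hnegj]
    have heqN : lamN n k (fmap n k w) (i : ℕ) = lamN n k (fmap n k w) (j : ℕ) := by
      rw [lamN, dif_pos i.isLt, lamN, dif_pos j.isLt]
      simpa using heq
    have hww : w ((k : ℤ) + 1 + (i : ℕ)) = w ((k : ℤ) + 1 + (j : ℕ)) := by omega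
    have := w.injective hww
    exact hij (Fin.ext (by omega))
  · intro i
    have hfi : fmap n k w i = lamN n k (fmap n k w) (i : ℕ) := by
      rw [lamN, dif_pos i.isLt]
    have hiLt := i.isLt
    rcases lt_or_ge (w ((k : ℤ) + 1 + (i : ℕ))) 0 with h | h
    · have e := lamN_fmap (w := w) i.isLt
      rw [if_pos h] at e
      have habs := w_abs_le hsp (a := (k : ℤ) + 1 + (i : ℕ))
        (by rw [abs_le]; constructor <;> omega)
      rw [abs_le] at habs
      rw [hfi, e]
      omega
    · have e := lamN_fmap (w := w) i.isLt
      rw [if_neg (by omega)] at e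
      have := count_le_k (k := k) (w := w) (w ((k : ℤ) + 1 + (i : ℕ)))
      rw [hfi, e]
      omega

end Stage5

section Stage6

variable {n k : ℕ} {w : Equiv.Perm ℤ}

lemma union_sdiff_right' {s t : Finset ℤ} (h : Disjoint s t) : (s ∪ t) \ t = s := by
  ext x
  simp only [Finset.mem_sdiff, Finset.mem_union]
  constructor
  · rintro ⟨hx | hx, hnx⟩
    · exact hx
    · exact absurd hx hnx
  · intro hx
    exact ⟨Or.inl hx, Finset.disjoint_left.1 h hx⟩

lemma card_filter_image {s : Finset ℤ} {f : ℤ → ℤ} (hf : Set.InjOn f s) (p : ℤ → Prop)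
    [DecidablePred p] :
    ((s.image f).filter p).card = (s.filter (fun i => p (f i))).card := by
  rw [Finset.filter_image,
    Finset.card_image_of_injOn (hf.mono (Finset.coe_subset.2 (Finset.filter_subset _ _)))]

lemma neg_iff_lt_rr (hsp : w ∈ SignedPerms n) (hgr : IsKGrassmannian n k w) (hkn : k < n)
    {t : ℕ} (ht : t < n - k) :
    (t < rr n k (fmap n k w) ↔ w ((k : ℤ) + 1 + t) < 0) :=
  (lt_rr_iff (fmap_mem hsp hgr hkn) ht).trans (fmap_gt_iff ht)

lemma pos_snd (hsp : w ∈ SignedPerms n) (hkn : k < n) {t : ℕ} (ht : t < n - k)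
    (h : ¬ w ((k : ℤ) + 1 + t) < 0) : 0 < w ((k : ℤ) + 1 + t) := by
  have := w_ne_zero hsp (a := (k : ℤ) + 1 + t) (by omega)
  omega

lemma Bset_fmap (hsp : w ∈ SignedPerms n) (hgr : IsKGrassmannian n k w) (hkn : k < n) :
    Bset n k (fmap n k w) = NW n k w := by
  ext x
  simp only [Bset, NW, topIdx, Finset.mem_image, Finset.mem_filter, Finset.mem_range,
    Finset.mem_Icc]
  constructor
  · rintro ⟨t, ⟨ht, hgt⟩, rfl⟩
    have hneg := (fmap_gt_iff ht).1 hgt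
    refine ⟨(k : ℤ) + 1 + t, ⟨⟨by omega, by omega⟩, hneg⟩, ?_⟩
    have e := lamN_fmap (w := w) ht
    rw [if_pos hneg] at e
    rw [e]
    omega
  · rintro ⟨p, ⟨⟨hp1, hp2⟩, hneg⟩, rfl⟩
    have ht : (p - (k : ℤ) - 1).toNat < n - k := by omega
    have hpe : ((k : ℤ) + 1 + ((p - (k : ℤ) - 1).toNat : ℕ)) = p := by omega
    refine ⟨(p - (k : ℤ) - 1).toNat, ⟨ht, ?_⟩, ?_⟩
    · refine (fmap_gt_iff ht).2 ?_
      rw [hpe]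
      exact hneg
    · have e := lamN_fmap (w := w) ht
      rw [hpe, if_pos hneg] at e
      rw [e]
      omega

lemma Rset_fmap (hsp : w ∈ SignedPerms n) (hgr : IsKGrassmannian n k w) (hkn : k < n) :
    Rset n k (fmap n k w) = DW k w ∪ PW n k w := by
  rw [Rset, Bset_fmap hsp hgr hkn, ← union_DPN hsp hgr hkn]
  apply union_sdiff_right'
  rw [Finset.disjoint_union_left]
  exact ⟨disj_DW_NW hsp, disj_PW_NW hsp⟩

lemma cardIccZN (k : ℕ) (P : ℤ → Prop) [DecidablePred P] :
    ((Finset.Icc (1 : ℤ) (k : ℤ)).filter P).card =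
      ((Finset.Icc 1 k).filter (fun i : ℕ => P (i : ℤ))).card := by
  apply Finset.card_bij (fun i _ => i.toNat)
  · intro i hi
    rw [Finset.mem_filter, Finset.mem_Icc] at hi
    rw [Finset.mem_filter, Finset.mem_Icc]
    have hc : ((i.toNat : ℕ) : ℤ) = i := by omega
    refine ⟨⟨by omega, by omega⟩, ?_⟩
    rw [hc]
    exact hi.2
  · intro a ha b hb hab
    rw [Finset.mem_filter, Finset.mem_Icc] at ha hb
    omega
  · intro j hj
    rw [Finset.mem_filter, Finset.mem_Icc] at hj
    exact ⟨(j : ℤ), Finset.mem_filter.2 ⟨Finset.mem_Icc.2 ⟨by omega, by omega⟩, hj.2⟩, by omega⟩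

lemma DW_filter_lt_snd (hsp : w ∈ SignedPerms n) (hgr : IsKGrassmannian n k w) (hkn : k < n)
    {t : ℕ} (ht : t < n - k) (hneg : ¬ w ((k : ℤ) + 1 + t) < 0) :
    ((DW k w).filter (fun x => x < w ((k : ℤ) + 1 + t))).card =
      k - lamN n k (fmap n k w) t := by
  have h1 : ((DW k w).filter (fun x => x < w ((k : ℤ) + 1 + t))).card =
      ((Finset.Icc (1 : ℤ) k).filter (fun i => w i < w ((k : ℤ) + 1 + t))).card :=
    card_filter_image (fun a _ b _ hab => w.injective hab) _
  have hunion : ((Finset.Icc (1 : ℤ) k).filter (fun i => w i < w ((k : ℤ) + 1 + t))) ∪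
      ((Finset.Icc (1 : ℤ) k).filter (fun i => w ((k : ℤ) + 1 + t) < w i)) =
      Finset.Icc (1 : ℤ) k := by
    ext i
    simp only [Finset.mem_union, Finset.mem_filter, Finset.mem_Icc]
    constructor
    · rintro (⟨h, _⟩ | ⟨h, _⟩) <;> exact h
    · intro h
      have hne : w i ≠ w ((k : ℤ) + 1 + t) := fun he => by
        have := w.injective he
        omega
      rcases lt_or_gt_of_ne hne with hlt | hlt
      · exact Or.inl ⟨h, hlt⟩
      · exact Or.inr ⟨h, hlt⟩
  have hdisj : Disjoint ((Finset.Icc (1 : ℤ) k).filter (fun i => w i < w ((k : ℤ) + 1 + t)))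
      ((Finset.Icc (1 : ℤ) k).filter (fun i => w ((k : ℤ) + 1 + t) < w i)) := by
    rw [Finset.disjoint_left]
    intro i hi hi'
    rw [Finset.mem_filter] at hi hi'
    omega
  have hcards := Finset.card_union_of_disjoint hdisj
  rw [hunion, card_IccZ] at hcards
  have h2 : ((Finset.Icc (1 : ℤ) k).filter (fun i => w ((k : ℤ) + 1 + t) < w i)).card =
      lamN n k (fmap n k w) t := by
    have e := lamN_fmap (w := w) ht
    rw [if_neg hneg] at e
    rw [e, cardIccZN k (fun i => w ((k : ℤ) + 1 + t) < w i)]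
  omega

lemma PW_filter_lt_snd (hsp : w ∈ SignedPerms n) (hgr : IsKGrassmannian n k w) (hkn : k < n)
    {t : ℕ} (ht : t < n - k) (hneg : ¬ w ((k : ℤ) + 1 + t) < 0) :
    ((PW n k w).filter (fun x => x < w ((k : ℤ) + 1 + t))).card =
      t - rr n k (fmap n k w) := by
  have hbij : (Finset.Ico (rr n k (fmap n k w)) t).card =
      ((PW n k w).filter (fun x => x < w ((k : ℤ) + 1 + t))).card := by
    refine Finset.card_bij (fun t' _ => w ((k : ℤ) + 1 + t')) ?_ ?_ ?_
    · intro t' ht'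
      rw [Finset.mem_Ico] at ht'
      have ht'm : t' < n - k := by omega
      have hnegt' : ¬ w ((k : ℤ) + 1 + t') < 0 := by
        intro hcon
        have := (neg_iff_lt_rr hsp hgr hkn ht'm).2 hcon
        omega
      have hpos := pos_snd hsp hkn ht'm hnegt'
      rw [Finset.mem_filter]
      constructor
      · rw [PW, Finset.mem_image]
        exact ⟨(k : ℤ) + 1 + t', Finset.mem_filter.2
          ⟨Finset.mem_Icc.2 ⟨by omega, by omega⟩, hpos⟩, rfl⟩
      · exact w_block2 hgr _ _ (by omega) (by omega) (by omega)
    · intro a ha b hb hab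
      have := w.injective hab
      omega
    · intro x hx
      rw [Finset.mem_filter, PW, Finset.mem_image] at hx
      obtain ⟨⟨q, hq, rfl⟩, hxlt⟩ := hx
      rw [Finset.mem_filter, Finset.mem_Icc] at hq
      have ht' : (q - (k : ℤ) - 1).toNat < n - k := by omega
      have hpe : ((k : ℤ) + 1 + ((q - (k : ℤ) - 1).toNat : ℕ)) = q := by omega
      have hqlt : q < (k : ℤ) + 1 + t := by
        by_contra hcon
        push_neg at hcon
        rcases eq_or_lt_of_le hcon with h | h
        · rw [← h] at hxlt
          exact lt_irrefl _ hxlt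
        · exact absurd (w_block2 hgr _ _ (by omega) h (by omega)) (not_lt.2 hxlt.le)
      refine ⟨(q - (k : ℤ) - 1).toNat, Finset.mem_Ico.2 ⟨?_, by omega⟩,
        by show w ((k : ℤ) + 1 + ((q - (k : ℤ) - 1).toNat : ℕ)) = w q; rw [hpe]⟩
      by_contra hcon
      push_neg at hcon
      have := (neg_iff_lt_rr hsp hgr hkn ht').1 hcon
      rw [hpe] at this
      omega
  rw [← hbij, Nat.card_Ico]

lemma cval_fmap (hsp : w ∈ SignedPerms n) (hgr : IsKGrassmannian n k w) (hkn : k < n)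
    {t : ℕ} (ht : t < n - k) (hneg : ¬ w ((k : ℤ) + 1 + t) < 0) :
    cval n k (fmap n k w) t = w ((k : ℤ) + 1 + t) := by
  have hlamw := fmap_mem hsp hgr hkn
  have hpos := pos_snd hsp hkn ht hneg
  have hle : lamN n k (fmap n k w) t ≤ k := by
    by_contra hcon
    push_neg at hcon
    exact hneg ((fmap_gt_iff ht).1 hcon)
  have hrrle : rr n k (fmap n k w) ≤ t := by
    by_contra hcon
    push_neg at hcon
    exact hneg ((neg_iff_lt_rr hsp hgr hkn ht).1 hcon)
  have hmem : w ((k : ℤ) + 1 + t) ∈ Rset n k (fmap n k w) := by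
    rw [Rset_fmap hsp hgr hkn, Finset.mem_union]
    right
    rw [PW, Finset.mem_image]
    exact ⟨(k : ℤ) + 1 + t, Finset.mem_filter.2
      ⟨Finset.mem_Icc.2 ⟨by omega, by omega⟩, hpos⟩, rfl⟩
  have hrank : ((Rset n k (fmap n k w)).filter
      (fun x => x < w ((k : ℤ) + 1 + t))).card = idx n k (fmap n k w) t := by
    rw [Rset_fmap hsp hgr hkn, Finset.filter_union, Finset.card_union_of_disjoint
      (Finset.disjoint_filter_filter disj_DW_PW), DW_filter_lt_snd hsp hgr hkn ht hneg,
      PW_filter_lt_snd hsp hgr hkn ht hneg, idx]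
    omega
  exact nth_eq_of_rank _ hmem hrank

lemma Cset_fmap (hsp : w ∈ SignedPerms n) (hgr : IsKGrassmannian n k w) (hkn : k < n) :
    Cset n k (fmap n k w) = PW n k w := by
  ext x
  rw [Cset, Finset.mem_image]
  constructor
  · rintro ⟨t, htm, rfl⟩
    rw [Finset.mem_filter, Finset.mem_range] at htm
    have hneg : ¬ w ((k : ℤ) + 1 + t) < 0 := fun hcon => by
      have := (fmap_gt_iff htm.1).2 hcon
      omega
    rw [cval_fmap hsp hgr hkn htm.1 hneg, PW, Finset.mem_image]
    exact ⟨(k : ℤ) + 1 + t, Finset.mem_filter.2 ⟨Finset.mem_Icc.2 ⟨by omega, by omega⟩,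
      pos_snd hsp hkn htm.1 hneg⟩, rfl⟩
  · intro hx
    rw [PW, Finset.mem_image] at hx
    obtain ⟨q, hq, rfl⟩ := hx
    rw [Finset.mem_filter, Finset.mem_Icc] at hq
    have ht : (q - (k : ℤ) - 1).toNat < n - k := by omega
    have hpe : ((k : ℤ) + 1 + ((q - (k : ℤ) - 1).toNat : ℕ)) = q := by omega
    have hneg : ¬ w ((k : ℤ) + 1 + ((q - (k : ℤ) - 1).toNat : ℕ)) < 0 := by
      rw [hpe]
      omega
    refine ⟨(q - (k : ℤ) - 1).toNat, Finset.mem_filter.2 ⟨Finset.mem_range.2 ht, ?_⟩, ?_⟩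
    · by_contra hcon
      push_neg at hcon
      have := (fmap_gt_iff ht).1 hcon
      rw [hpe] at this
      omega
    · rw [cval_fmap hsp hgr hkn ht hneg, hpe]

lemma Dset_fmap (hsp : w ∈ SignedPerms n) (hgr : IsKGrassmannian n k w) (hkn : k < n) :
    Dset n k (fmap n k w) = DW k w := by
  rw [Dset, Rset_fmap hsp hgr hkn, Cset_fmap hsp hgr hkn]
  exact union_sdiff_right' disj_DW_PW

lemma first_block_fmap (hsp : w ∈ SignedPerms n) (hgr : IsKGrassmannian n k w) (hkn : k < n)
    {i : ℤ} (hi1 : 1 ≤ i) (hi2 : i ≤ (k : ℤ)) :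
    nth (Dset n k (fmap n k w)) (i - 1).toNat = w i := by
  apply nth_eq_of_rank
  · rw [Dset_fmap hsp hgr hkn, DW, Finset.mem_image]
    exact ⟨i, Finset.mem_Icc.2 ⟨hi1, hi2⟩, rfl⟩
  · rw [Dset_fmap hsp hgr hkn]
    have h1 : ((DW k w).filter (fun x => x < w i)).card =
        ((Finset.Icc (1 : ℤ) k).filter (fun i' => w i' < w i)).card :=
      card_filter_image (fun a _ b _ hab => w.injective hab) _
    have h2 : (Finset.Icc (1 : ℤ) k).filter (fun i' => w i' < w i) =
        (Finset.Icc (1 : ℤ) k).filter (fun i' => i' < i) := by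
      apply Finset.filter_congr
      intro i' hi'
      rw [Finset.mem_Icc] at hi'
      constructor
      · intro h
        by_contra hcon
        push_neg at hcon
        rcases eq_or_lt_of_le hcon with hh | hh
        · rw [hh] at h
          exact lt_irrefl _ h
        · exact absurd (w_block1 hgr hkn i i' hi1 hh hi'.2) (not_lt.2 h.le)
      · intro h
        exact w_block1 hgr hkn i' i hi'.1 h hi2
    have h3 : (Finset.Icc (1 : ℤ) k).filter (fun i' => i' < i) = Finset.Icc (1 : ℤ) (i - 1) := by
      ext i'
      rw [Finset.mem_filter, Finset.mem_Icc, Finset.mem_Icc]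
      omega
    rw [h1, h2, h3, Int.card_Icc]
    omega

lemma core_fmap_pos (hsp : w ∈ SignedPerms n) (hgr : IsKGrassmannian n k w) (hkn : k < n)
    {a : ℤ} (h1 : 1 ≤ a) (h2 : a ≤ (n : ℤ)) : core n k (fmap n k w) a = w a := by
  have hlamw := fmap_mem hsp hgr hkn
  rcases le_or_gt a (k : ℤ) with hak | hak
  · obtain ⟨e, _⟩ := core_first hlamw hkn h1 hak
    rw [e, first_block_fmap hsp hgr hkn h1 hak]
  · have ht : (a - (k : ℤ) - 1).toNat < n - k := by omega
    have hpe : ((k : ℤ) + 1 + ((a - (k : ℤ) - 1).toNat : ℕ)) = a := by omega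
    rcases lt_or_ge (w a) 0 with hneg | hge
    · have hgt : k < lamN n k (fmap n k w) (a - (k : ℤ) - 1).toNat := by
        refine (fmap_gt_iff ht).2 ?_
        rw [hpe]
        exact hneg
      obtain ⟨e, _, _⟩ := core_second_neg hlamw hak h2 hgt
      rw [e]
      have ev := lamN_fmap (w := w) ht
      rw [hpe, if_pos hneg] at ev
      rw [ev]
      omega
    · have hneg : ¬ w ((k : ℤ) + 1 + ((a - (k : ℤ) - 1).toNat : ℕ)) < 0 := by
        rw [hpe]
        omega
      have hle : lamN n k (fmap n k w) (a - (k : ℤ) - 1).toNat ≤ k := by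
        by_contra hcon
        push_neg at hcon
        have := (fmap_gt_iff ht).1 hcon
        rw [hpe] at this
        omega
      obtain ⟨e, _, _⟩ := core_second_pos hlamw hkn hak h2 hle
      rw [e, cval_fmap hsp hgr hkn ht hneg, hpe]

lemma gmap_fmap (hsp : w ∈ SignedPerms n) (hgr : IsKGrassmannian n k w) (hkn : k < n) :
    gmap n k (fmap n k w) = w := by
  have hlamw := fmap_mem hsp hgr hkn
  apply Equiv.ext
  intro a
  rw [gmap_apply hlamw hkn]
  by_cases hc1 : 1 ≤ a ∧ a ≤ (n : ℤ)
  · rw [uraw_pos_range _ hc1.1 hc1.2]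
    exact core_fmap_pos hsp hgr hkn hc1.1 hc1.2
  · by_cases hc2 : 1 ≤ -a ∧ -a ≤ (n : ℤ)
    · rw [uraw, if_neg hc1, if_pos hc2, core_fmap_pos hsp hgr hkn hc2.1 hc2.2]
      have := hsp.1 a
      omega
    · rw [uraw_out _ (by omega)]
      rcases eq_or_ne a 0 with h | h
      · rw [h, w_zero hsp]
      · exact (hsp.2 a (by rcases abs_cases a with ⟨e, _⟩ | ⟨e, _⟩ <;> omega)).symm

end Stage6

end KG

/-- the `k`-Grassmannian elements of the hyperoctahedral group
`W_n` are in bijection with the `k`-strict partitions whose diagram fits in an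
`(n−k) × (n+k)` rectangle. -/
theorem kGrassmannian_bijection_kStrict (n k : ℕ) (hk : k ≤ n - 1) (hn : 1 ≤ n) :
    ∃ f : Equiv.Perm ℤ → (Fin (n - k) → ℕ),
      Set.BijOn f {w | w ∈ SignedPerms n ∧ IsKGrassmannian n k w}
        {lam | KStrictRect n k lam} := by
  have hkn : k < n := by omega
  refine ⟨KG.fmap n k, ?_⟩
  have hinv : Set.InvOn (KG.gmap n k) (KG.fmap n k)
      {w | w ∈ SignedPerms n ∧ IsKGrassmannian n k w} {lam | KStrictRect n k lam} := by
    constructor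
    · intro w hw
      exact KG.gmap_fmap hw.1 hw.2 hkn
    · intro lam hlam
      exact KG.fmap_gmap hlam hkn
  exact hinv.bijOn (fun w hw => KG.fmap_mem hw.1 hw.2 hkn)
    (fun lam hlam => KG.gmap_mem hlam hkn)
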